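/- Let G be a finite weighted complete graph with weights in [0,1] and G_ε its ε-thresholded version. Every 0-dimensional persistence point of G with death time d ≤ ε is also a persistence point of G_ε with the same death time, and every finite persistence point of G with death time d ∈ (ε, 1] corresponds to a persistence point of G_ε with death time exactly 1. -/

import Mathlib

open scoped Classical
noncomputable section

variable {V : Type*} [Fintype V]

/-- Vietoris–Rips 1-skeleton of a weighted complete graph at scale `α`. -/
def vrGraph (w : V → V → ℝ) (α : ℝ) : SimpleGraph V where
  Adj i j := i ≠ j ∧ max (w i j) (w j i) ≤ α
  symm := by
    constructor
    intro i j h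
    exact ⟨h.1.symm, by rw [max_comm]; exact h.2⟩
  loopless := ⟨fun i h => h.1 rfl⟩

/-- Number of connected components of the Rips 1-skeleton at scale `α`. -/
def compCount (w : V → V → ℝ) (α : ℝ) : ℕ :=
  Nat.card (vrGraph w α).ConnectedComponent

/-- Left limit of the component counting function at `d`. -/
def compCountLeft (w : V → V → ℝ) (d : ℝ) : ℕ :=
  sInf (compCount w '' Set.Iio d)

/-- Multiplicity of `d` as a finite death time in the `H₀` persistence diagram. -/
def deathMult (w : V → V → ℝ) (d : ℝ) : ℕ :=
  compCountLeft w d - compCount w d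

/-- The finitely many candidate filtration values (the edge weights). -/
def weightVals (w : V → V → ℝ) : Finset ℝ :=
  Finset.image (fun p : V × V => max (w p.1 p.2) (w p.2 p.1)) Finset.univ

/-- The multiset of finite death times of the 0-dimensional persistence diagram
of the Vietoris–Rips filtration of the weighted complete graph `w`. -/
def finiteDeaths (w : V → V → ℝ) : Multiset ℝ :=
  (weightVals w).val.bind fun d => Multiset.replicate (deathMult w d) d

/-- The 0-dimensional persistence diagram (finite points; all births are `0`). -/
def D0 (w : V → V → ℝ) : Multiset (ℝ × ℝ) :=
  (finiteDeaths w).map fun d => (0, d)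

/-- Threshold modification: weights above `ε` are raised to `1`. -/
def thresh (w : V → V → ℝ) (ε : ℝ) : V → V → ℝ :=
  fun i j => if w i j ≤ ε then w i j else 1

/-- The number of finite 0-dimensional persistence points with death time `> ε`. -/
def mEps (w : V → V → ℝ) (ε : ℝ) : ℕ :=
  ((finiteDeaths w).filter (fun d => ε < d)).card

set_option linter.unusedSectionVars false
set_option linter.unusedVariables false

-- auxiliary lemmas
lemma vrGraph_mono (w : V → V → ℝ) {α β : ℝ} (h : α ≤ β) : vrGraph w α ≤ vrGraph w β :=
  fun _ _ hij => ⟨hij.1, hij.2.trans h⟩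

lemma compCount_anti (w : V → V → ℝ) {α β : ℝ} (h : α ≤ β) :
    compCount w β ≤ compCount w α := by
  have hsurj : Function.Surjective
      (SimpleGraph.ConnectedComponent.map (SimpleGraph.Hom.ofLE (vrGraph_mono w h))) := by
    intro c
    induction c using SimpleGraph.ConnectedComponent.ind with
    | _ v => exact ⟨SimpleGraph.connectedComponentMk _ v, rfl⟩
  exact Nat.card_le_card_of_surjective _ hsurj

lemma mem_weightVals {w : V → V → ℝ} {d : ℝ} :
    d ∈ weightVals w ↔ ∃ i j, max (w i j) (w j i) = d := by
  simp [weightVals, Prod.exists]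

lemma max_mem_weightVals (w : V → V → ℝ) (i j : V) :
    max (w i j) (w j i) ∈ weightVals w := mem_weightVals.2 ⟨i, j, rfl⟩

lemma vrGraph_congr {w w' : V → V → ℝ} {α β : ℝ}
    (h : ∀ i j, (w i j ≤ α ↔ w' i j ≤ β)) : vrGraph w α = vrGraph w' β := by
  ext i j
  show (i ≠ j ∧ max (w i j) (w j i) ≤ α) ↔ (i ≠ j ∧ max (w' i j) (w' j i) ≤ β)
  rw [max_le_iff, max_le_iff, h i j, h j i]

lemma vrGraph_congr' {w : V → V → ℝ} {α β : ℝ}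
    (h : ∀ v ∈ weightVals w, (v ≤ α ↔ v ≤ β)) : vrGraph w α = vrGraph w β := by
  ext i j
  show (i ≠ j ∧ max (w i j) (w j i) ≤ α) ↔ (i ≠ j ∧ max (w i j) (w j i) ≤ β)
  rw [h _ (max_mem_weightVals w i j)]

lemma compCountLeft_eq (w : V → V → ℝ) {d α : ℝ} (hαd : α < d)
    (hconst : ∀ β, α ≤ β → β < d → compCount w β = compCount w α) :
    compCountLeft w d = compCount w α := by
  have hmem : compCount w α ∈ compCount w '' Set.Iio d := ⟨α, hαd, rfl⟩
  refine le_antisymm (Nat.sInf_le hmem) (le_csInf ⟨_, hmem⟩ ?_)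
  rintro n ⟨β, hβ, rfl⟩
  rcases le_or_gt α β with h | h
  · exact (hconst β h hβ).ge
  · exact compCount_anti w h.le

-- thresh comparison lemmas
lemma compCount_thresh_low {w : V → V → ℝ} (hw1 : ∀ i j, w i j ≤ 1) {ε α : ℝ}
    (hα : α ≤ ε) (hε1 : ε ≤ 1) : compCount (thresh w ε) α = compCount w α := by
  have hg : vrGraph (thresh w ε) α = vrGraph w α := by
    refine vrGraph_congr fun i j => ?_
    by_cases h : w i j ≤ ε
    · simp [thresh, h]
    · push_neg at h
      have h1 : α < 1 := by have := hw1 i j; linarith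
      simp only [thresh, if_neg (not_le.2 h)]
      exact iff_of_false (by linarith) (by linarith)
  rw [compCount, compCount, hg]

lemma compCount_thresh_mid {w : V → V → ℝ} {ε α : ℝ} (hα : ε ≤ α) (h1 : α < 1) :
    compCount (thresh w ε) α = compCount w ε := by
  have hg : vrGraph (thresh w ε) α = vrGraph w ε := by
    refine vrGraph_congr fun i j => ?_
    by_cases h : w i j ≤ ε
    · simp only [thresh, if_pos h]
      exact iff_of_true (h.trans hα) h
    · simp only [thresh, if_neg h]
      exact iff_of_false (by linarith) h
  rw [compCount, compCount, hg]

lemma compCount_thresh_one {w : V → V → ℝ} (hw1 : ∀ i j, w i j ≤ 1) {ε α : ℝ}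
    (h1 : 1 ≤ α) : compCount (thresh w ε) α = compCount w α := by
  have hg : vrGraph (thresh w ε) α = vrGraph w α := by
    refine vrGraph_congr fun i j => ?_
    have ht : thresh w ε i j ≤ 1 := by
      unfold thresh; split
      · exact hw1 i j
      · exact le_refl 1
    exact iff_of_true (ht.trans h1) ((hw1 i j).trans h1)
  rw [compCount, compCount, hg]

-- counting lemmas
lemma count_finiteDeaths (w : V → V → ℝ) (d : ℝ) :
    (finiteDeaths w).count d = if d ∈ weightVals w then deathMult w d else 0 := by
  rw [finiteDeaths, Multiset.count_bind]
  simp_rw [Multiset.count_replicate]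
  exact Finset.sum_ite_eq' (weightVals w) d (fun e => deathMult w e)

lemma multiset_filter_bind {α β : Type*} (s : Multiset α) (f : α → Multiset β)
    (p : β → Prop) [DecidablePred p] :
    (s.bind f).filter p = s.bind fun a => (f a).filter p := by
  induction s using Multiset.induction with
  | empty => simp
  | cons a s ih => simp [ih]

lemma filter_replicate {α : Type*} (p : α → Prop) [DecidablePred p] (n : ℕ) (a : α) :
    (Multiset.replicate n a).filter p = if p a then Multiset.replicate n a else 0 := by
  induction n with
  | zero => simp
  | succ n ih =>
    rw [Multiset.replicate_succ, Multiset.filter_cons, ih]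
    by_cases h : p a <;> simp [h, Multiset.replicate_succ]

lemma card_filter_finiteDeaths (w : V → V → ℝ) (p : ℝ → Prop) [DecidablePred p] :
    ((finiteDeaths w).filter p).card = ∑ e ∈ (weightVals w).filter p, deathMult w e := by
  rw [finiteDeaths, multiset_filter_bind, Multiset.card_bind, Finset.sum_filter]
  show Multiset.sum (Multiset.map _ (weightVals w).val) = _
  rw [Finset.sum]
  congr 1
  refine Multiset.map_congr rfl fun e _ => ?_
  simp only [Function.comp_apply, filter_replicate]
  by_cases h : p e <;> simp [h]
lemma telescope (u : V → V → ℝ) (hu1 : ∀ v ∈ weightVals u, v ≤ 1) :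
    ∀ (n : ℕ) (a : ℝ), ((weightVals u).filter (fun e => a < e)).card = n →
      ∑ e ∈ (weightVals u).filter (fun e => a < e), deathMult u e
        = compCount u a - compCount u 1 := by
  intro n
  induction n using Nat.strong_induction_on with
  | _ n ih =>
    intro a hcard
    by_cases hne : ((weightVals u).filter (fun e => a < e)).Nonempty
    case neg =>
      rw [Finset.not_nonempty_iff_eq_empty] at hne
      rw [hne, Finset.sum_empty]
      have hle : ∀ v ∈ weightVals u, v ≤ a := by
        intro v hv
        by_contra hc
        exact Finset.eq_empty_iff_forall_notMem.1 hne v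
          (Finset.mem_filter.2 ⟨hv, not_le.1 hc⟩)
      have hg : compCount u a = compCount u 1 := by
        have : vrGraph u a = vrGraph u 1 :=
          vrGraph_congr' fun v hv => iff_of_true (hle v hv) (hu1 v hv)
        rw [compCount, compCount, this]
      omega
    case pos =>
      set T := (weightVals u).filter (fun e => a < e) with hT
      have hm := T.min'_mem hne
      set m := T.min' hne with hmdef
      have hmW : m ∈ weightVals u := (Finset.mem_filter.1 hm).1
      have ham : a < m := (Finset.mem_filter.1 hm).2
      have herase : T.erase m = (weightVals u).filter (fun e => m < e) := by
        ext e
        simp only [Finset.mem_erase, hT, Finset.mem_filter]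
        constructor
        · rintro ⟨hne', hW, _⟩
          exact ⟨hW, lt_of_le_of_ne (T.min'_le e (Finset.mem_filter.2 ⟨hW, ‹a < e›⟩))
            (Ne.symm hne')⟩
        · rintro ⟨hW, hme⟩
          exact ⟨ne_of_gt hme, hW, ham.trans hme⟩
      have hcard' : ((weightVals u).filter (fun e => m < e)).card < n := by
        rw [← herase, Finset.card_erase_of_mem hm, hcard]
        have : 0 < n := by rw [← hcard]; exact Finset.card_pos.2 hne
        omega
      have hIH := ih _ hcard' m rfl
      have hsum : ∑ e ∈ T, deathMult u e
          = deathMult u m + ∑ e ∈ T.erase m, deathMult u e :=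
        (Finset.add_sum_erase T _ hm).symm
      have hleft : compCountLeft u m = compCount u a := by
        refine compCountLeft_eq u ham fun β hβ hβm => ?_
        have : vrGraph u β = vrGraph u a := by
          refine vrGraph_congr' fun v hv => ?_
          rcases le_or_gt v a with h | h
          · exact iff_of_true (h.trans hβ) h
          · have : m ≤ v := T.min'_le v (Finset.mem_filter.2 ⟨hv, h⟩)
            exact iff_of_false (by linarith) (by linarith)
        rw [compCount, compCount, this]
      have h1m : compCount u 1 ≤ compCount u m := compCount_anti u (hu1 m hmW)
      have hma : compCount u m ≤ compCount u a := compCount_anti u ham.le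
      rw [hsum, herase, hIH, deathMult, hleft]
      omega

/-- Every 0-dimensional persistence point of `G` with death
`d ≤ ε` is also a persistence point of `G_ε` with the same death (with the same
multiplicity), and the finite persistence points of `G` with death in `(ε, 1]`
correspond to persistence points of `G_ε` with death exactly `1`. -/
theorem deaths_of_thresholded
    {N : ℕ} (w : Fin N → Fin N → ℝ)
    (hw0 : ∀ i j, 0 ≤ w i j) (hw1 : ∀ i j, w i j ≤ 1)
    (hsymm : ∀ i j, w i j = w j i)
    (ε : ℝ) (hε0 : 0 ≤ ε) (hε1 : ε ≤ 1) :
    (∀ d : ℝ, d ≤ ε →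
      (finiteDeaths (thresh w ε)).count d = (finiteDeaths w).count d) ∧
    (∀ d ∈ finiteDeaths (thresh w ε), ε < d → d = 1) ∧
    ((finiteDeaths (thresh w ε)).filter (fun d => ε < d)).card
      = ((finiteDeaths w).filter (fun d => ε < d)).card := by
  have htle : ∀ i j, thresh w ε i j ≤ 1 := by
    intro i j; unfold thresh; split
    · exact hw1 i j
    · exact le_refl 1
  have hu1' : ∀ v ∈ weightVals (thresh w ε), v ≤ 1 := by
    intro v hv
    obtain ⟨i, j, rfl⟩ := mem_weightVals.1 hv
    exact max_le (htle i j) (htle j i)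
  have hu1 : ∀ v ∈ weightVals w, v ≤ 1 := by
    intro v hv
    obtain ⟨i, j, rfl⟩ := mem_weightVals.1 hv
    exact max_le (hw1 i j) (hw1 j i)
  refine ⟨?_, ?_, ?_⟩
  · -- part 1
    intro d hd
    rw [count_finiteDeaths, count_finiteDeaths]
    have hmem : d ∈ weightVals (thresh w ε) ↔ d ∈ weightVals w := by
      constructor
      · intro h
        obtain ⟨i, j, hij⟩ := mem_weightVals.1 h
        have hwi : w i j ≤ ε := by
          by_contra hc
          have h1 : thresh w ε i j = 1 := if_neg hc
          have h2 : (1:ℝ) ≤ d := h1 ▸ (le_max_left _ _).trans_eq hij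
          push_neg at hc
          have := hw1 i j; linarith
        have hwj : w j i ≤ ε := by
          by_contra hc
          have h1 : thresh w ε j i = 1 := if_neg hc
          have h2 : (1:ℝ) ≤ d := h1 ▸ (le_max_right _ _).trans_eq hij
          push_neg at hc
          have := hw1 j i; linarith
        refine mem_weightVals.2 ⟨i, j, ?_⟩
        rw [← hij]
        unfold thresh
        rw [if_pos hwi, if_pos hwj]
      · intro h
        obtain ⟨i, j, hij⟩ := mem_weightVals.1 h
        have hwi : w i j ≤ ε := le_trans ((le_max_left _ _).trans_eq hij) hd
        have hwj : w j i ≤ ε := le_trans ((le_max_right _ _).trans_eq hij) hd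
        refine mem_weightVals.2 ⟨i, j, ?_⟩
        show max (thresh w ε i j) (thresh w ε j i) = d
        unfold thresh
        rw [if_pos hwi, if_pos hwj]
        exact hij
    have hcc : compCount (thresh w ε) d = compCount w d :=
      compCount_thresh_low hw1 hd hε1
    have hl : compCountLeft (thresh w ε) d = compCountLeft w d := by
      unfold compCountLeft
      congr 1
      refine Set.image_congr fun β hβ => ?_
      exact compCount_thresh_low hw1 (le_of_lt (lt_of_lt_of_le hβ hd)) hε1
    have hdm : deathMult (thresh w ε) d = deathMult w d := by
      unfold deathMult
      rw [hcc, hl]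
    by_cases hW : d ∈ weightVals w
    · rw [if_pos hW, if_pos (hmem.2 hW), hdm]
    · rw [if_neg hW, if_neg (fun h => hW (hmem.1 h))]
  · -- part 2
    intro d hd hεd
    obtain ⟨e, he, hde⟩ := Multiset.mem_bind.1 hd
    have hdW : d ∈ weightVals (thresh w ε) := by
      rw [Multiset.eq_of_mem_replicate hde]
      exact he
    obtain ⟨i, j, hij⟩ := mem_weightVals.1 hdW
    unfold thresh at hij
    by_cases ha : w i j ≤ ε <;> by_cases hb : w j i ≤ ε
    · rw [if_pos ha, if_pos hb] at hij
      have : d ≤ ε := hij ▸ max_le ha hb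
      linarith
    · rw [if_pos ha, if_neg hb] at hij
      rw [← hij]
      exact max_eq_right (ha.trans hε1)
    · rw [if_neg ha, if_pos hb] at hij
      rw [← hij]
      exact max_eq_left (hb.trans hε1)
    · rw [if_neg ha, if_neg hb] at hij
      rw [← hij]
      exact max_self 1
  · -- part 3
    rw [card_filter_finiteDeaths, card_filter_finiteDeaths,
      telescope w hu1 _ ε rfl, telescope (thresh w ε) hu1' _ ε rfl,
      compCount_thresh_low hw1 le_rfl hε1, compCount_thresh_one hw1 le_rfl]

end
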